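/- Let b: Q → ℂ be square integrable on a cube Q ⊂ ℝⁿ with ∫_Q |b|² ≤ C|Q| and Re ∫_Q b ≥ |Q| (normalization ∫_Q b = |Q| suffices). Fix δ ∈ (0,1). Let {Q_i} be a collection of pairwise disjoint dyadic subcubes of Q that are maximal with respect to the property Re ∫_{Q_i} b ≤ δ|Q_i|. Then ∑ |Q_i| ≤ (1−η)|Q| for some η > 0 depending only on C and δ; specifically (1−δ)∑|Q_i| ≤ Re ∫_{⋃Q_i}(1−b) = −Re ∫_{Q \ ⋃Q_i}(1−b) ≤ C' |Q|^{1/2} |Q \ ⋃Q_i|^{1/2}, which forces |Q \ ⋃Q_i| ≥ η|Q|. -/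

import Mathlib

open MeasureTheory Set

/-- The axis-parallel closed cube in `ℝⁿ` with lower-left corner `a` and sidelength `l`. -/
def cube (n : ℕ) (a : Fin n → ℝ) (l : ℝ) : Set (Fin n → ℝ) :=
  {x | ∀ i, a i ≤ x i ∧ x i ≤ a i + l}

lemma cube_eq_pi (n : ℕ) (a : Fin n → ℝ) (l : ℝ) :
    cube n a l = Set.pi univ fun i => Icc (a i) (a i + l) := by
  ext x; simp only [cube, mem_setOf_eq, Set.mem_pi, Set.mem_univ, Set.mem_Icc, forall_true_left]

lemma measurableSet_cube (n : ℕ) (a : Fin n → ℝ) (l : ℝ) :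
    MeasurableSet (cube n a l) := by
  rw [cube_eq_pi]
  exact MeasurableSet.univ_pi fun i => measurableSet_Icc

lemma volume_cube (n : ℕ) (a : Fin n → ℝ) {l : ℝ} (hl : 0 ≤ l) :
    volume (cube n a l) = ENNReal.ofReal (l ^ n) := by
  rw [cube_eq_pi, volume_pi_pi]
  simp [Real.volume_Icc, ← ENNReal.ofReal_pow hl]


lemma final_num (C δ η L S : ℝ) (hC : 0 < C) (hδ0 : 0 < δ) (hδ1 : δ < 1)
    (hη : η = (1 - δ) ^ 2 / (8 * (1 + C))) (hL0 : 0 < L) (hS0 : 0 ≤ S) (hSL : S ≤ L)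
    (hkey2 : (1 - δ) ^ 2 * S ^ 2 ≤ 2 * (1 + C) * L * (L - S)) : S ≤ (1 - η) * L := by
  have hK : (0:ℝ) < 1 + C := by linarith
  have hηpos : 0 < η := by
    rw [hη]; exact div_pos (pow_pos (by linarith) 2) (by linarith)
  have hη8 : (1 - δ) ^ 2 = 8 * (1 + C) * η := by rw [hη]; field_simp
  have hηsmall : η < 1 / 8 := by
    rw [hη, div_lt_iff₀ (by positivity)]
    nlinarith
  by_contra hcon
  push_neg at hcon
  have h2 : L - S < η * L := by nlinarith
  have h0 : 0 ≤ (1 - η) * L := by nlinarith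
  have h3 : ((1 - η) * L) ^ 2 ≤ S ^ 2 := by nlinarith
  have hstep1 : 8 * (1 + C) * η * ((1 - η) * L) ^ 2 ≤ (1 - δ) ^ 2 * S ^ 2 := by
    calc 8 * (1 + C) * η * ((1 - η) * L) ^ 2 ≤ 8 * (1 + C) * η * S ^ 2 :=
          mul_le_mul_of_nonneg_left h3 (by positivity)
      _ = (1 - δ) ^ 2 * S ^ 2 := by rw [hη8]
  have hstep2 : 2 * (1 + C) * L * (L - S) < 2 * (1 + C) * L * (η * L) :=
    mul_lt_mul_of_pos_left h2 (by positivity)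
  have hfin : 8 * (1 + C) * η * ((1 - η) * L) ^ 2 < 2 * (1 + C) * L * (η * L) :=
    lt_of_le_of_lt (hstep1.trans hkey2) hstep2
  have hT : 0 < (1 + C) * η * (L * L) := by positivity
  have h5 : (1 - η) ^ 2 < 1 / 4 := by nlinarith [hfin, hT]
  nlinarith [h5, hηsmall, sq_nonneg (3 / 4 - η)]

set_option maxHeartbeats 1000000 in
/-- Stopping-time lemma: if `b` is square integrable on a cube `Q` with `∫_Q |b|² ≤ C|Q|` and
`Re ∫_Q b ≥ |Q|`, and `Q_i` are pairwise disjoint subcubes of `Q` on which the averages of `b`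
are small, `Re ∫_{Q_i} b ≤ δ|Q_i|`, then `∑|Q_i| ≤ (1-η)|Q|` for some `η > 0` depending only
on `C` and `δ`. -/
theorem bad_cubes_do_not_cover (C δ : ℝ) (hC : 0 < C) (hδ : δ ∈ Ioo (0 : ℝ) 1) :
    ∃ η : ℝ, 0 < η ∧
      ∀ (n : ℕ) (a : Fin n → ℝ) (l : ℝ), 0 < l →
      ∀ b : (Fin n → ℝ) → ℂ,
        IntegrableOn b (cube n a l) volume →
        IntegrableOn (fun x => ‖b x‖ ^ 2) (cube n a l) volume →
        (∫ x in cube n a l, ‖b x‖ ^ 2) ≤ C * l ^ n →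
        l ^ n ≤ (∫ x in cube n a l, b x).re →
        ∀ (c : ℕ → (Fin n → ℝ)) (s : ℕ → ℝ),
          (∀ i, 0 ≤ s i) →
          (∀ i, cube n (c i) (s i) ⊆ cube n a l) →
          Pairwise (fun i j => Disjoint (cube n (c i) (s i)) (cube n (c j) (s j))) →
          (∀ i, (∫ x in cube n (c i) (s i), b x).re ≤ δ * (s i) ^ n) →
          (∑' i, (s i) ^ n) ≤ (1 - η) * l ^ n := by
  obtain ⟨hδ0, hδ1⟩ := hδ
  have hd0 : 0 < 1 - δ := by linarith
  refine ⟨(1 - δ) ^ 2 / (8 * (1 + C)), by positivity, ?_⟩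
  intro n a l hl b hb hb2 hbC hbnorm c s hs hsub hdisj hsmall
  set η : ℝ := (1 - δ) ^ 2 / (8 * (1 + C)) with hηdef
  set L : ℝ := l ^ n with hLdef
  have hL0 : 0 < L := pow_pos hl n
  set Q := cube n a l with hQdef
  set Qi : ℕ → Set (Fin n → ℝ) := fun i => cube n (c i) (s i) with hQidef
  set E := ⋃ i, Qi i with hEdef
  have hmQ : MeasurableSet Q := measurableSet_cube n a l
  have hmQi : ∀ i, MeasurableSet (Qi i) := fun i => measurableSet_cube _ _ _
  have hmE : MeasurableSet E := MeasurableSet.iUnion hmQi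
  have hEQ : E ⊆ Q := iUnion_subset hsub
  have hvolQ : volume Q = ENNReal.ofReal L := volume_cube n a hl.le
  have hQfin : volume Q < ⊤ := by rw [hvolQ]; exact ENNReal.ofReal_lt_top
  have hvolQi : ∀ i, volume (Qi i) = ENNReal.ofReal (s i ^ n) :=
    fun i => volume_cube _ _ (hs i)
  have hvolE : volume E = ∑' i, ENNReal.ofReal (s i ^ n) := by
    rw [hEdef, measure_iUnion hdisj hmQi]; exact tsum_congr hvolQi
  have hEle : volume E ≤ volume Q := measure_mono hEQ
  have hsumm : Summable fun i => s i ^ n := by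
    have h1 : (∑' i, ENNReal.ofReal (s i ^ n)) ≠ ⊤ := by
      rw [← hvolE]; exact (hEle.trans_lt hQfin).ne
    exact (ENNReal.summable_toReal h1).congr fun i =>
      ENNReal.toReal_ofReal (pow_nonneg (hs i) n)
  set S : ℝ := ∑' i, s i ^ n with hSdef
  have hS0 : 0 ≤ S := tsum_nonneg fun i => pow_nonneg (hs i) n
  have hvolE' : volume E = ENNReal.ofReal S := by
    rw [hvolE, ENNReal.ofReal_tsum_of_nonneg (fun i => pow_nonneg (hs i) n) hsumm]
  have hSL : S ≤ L := by
    have h := hEle; rw [hvolE', hvolQ] at h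
    exact (ENNReal.ofReal_le_ofReal_iff hL0.le).mp h
  -- the real function g = 1 - Re b
  set g : (Fin n → ℝ) → ℝ := fun x => 1 - (b x).re with hgdef
  have hbre : IntegrableOn (fun x => (b x).re) Q := by
    have := hb.re
    exact this
  have hgint : IntegrableOn g Q := by
    exact (integrableOn_const hQfin.ne).sub hbre
  -- integral of g over each Qi
  have hint1 : ∀ i, ∫ x in Qi i, g x = s i ^ n - (∫ x in Qi i, b x).re := by
    intro i
    have hbi : IntegrableOn b (Qi i) := hb.mono_set (hsub i)
    have h1 : IntegrableOn (fun _ : Fin n → ℝ => (1:ℝ)) (Qi i) :=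
      integrableOn_const ((measure_mono (hsub i)).trans_lt hQfin).ne
    have hbrei : IntegrableOn (fun x => (b x).re) (Qi i) := hbre.mono_set (hsub i)
    rw [hgdef]
    rw [integral_sub h1 hbrei]
    congr 1
    · rw [setIntegral_const, measureReal_def, hvolQi i, ENNReal.toReal_ofReal (pow_nonneg (hs i) n)]
      simp
    · have := integral_re hbi
      simpa using this
  have hsum2 : HasSum (fun i => ∫ x in Qi i, g x) (∫ x in E, g x) :=
    hasSum_integral_iUnion hmQi hdisj (hgint.mono_set hEQ)
  have hlow : (1 - δ) * S ≤ ∫ x in E, g x := by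
    rw [← hsum2.tsum_eq, hSdef, ← tsum_mul_left]
    refine Summable.tsum_le_tsum (fun i => ?_) (hsumm.mul_left _) hsum2.summable
    rw [hint1 i]
    nlinarith [hsmall i]
  -- split Q into E and A = Q \ E
  set A := Q \ E with hAdef
  have hAQ : A ⊆ Q := diff_subset
  have hsplit : (∫ x in Q ∩ E, g x) + (∫ x in A, g x) = ∫ x in Q, g x :=
    integral_inter_add_diff hmE hgint
  have hQE : Q ∩ E = E := inter_eq_self_of_subset_right hEQ
  have hQg : (∫ x in Q, g x) ≤ 0 := by
    have h1 : IntegrableOn (fun _ : Fin n → ℝ => (1:ℝ)) Q :=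
      integrableOn_const hQfin.ne
    rw [hgdef]
    rw [integral_sub h1 hbre]
    have h2 : (∫ _ in Q, (1:ℝ)) = L := by
      rw [setIntegral_const, measureReal_def, hvolQ, ENNReal.toReal_ofReal hL0.le]; simp
    have h3 : (∫ x in Q, (b x).re) = (∫ x in Q, b x).re := by
      have := integral_re hb; simpa using this
    rw [h2, h3]; linarith
  have hEg : (∫ x in E, g x) ≤ - ∫ x in A, g x := by
    rw [hQE] at hsplit; linarith
  have habs : - (∫ x in A, g x) ≤ ∫ x in A, |g x| := by
    have h1 := norm_integral_le_integral_norm (μ := volume.restrict A) g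
    simp only [Real.norm_eq_abs] at h1
    have h2 := neg_abs_le (∫ x in A, g x)
    linarith
  -- Cauchy-Schwarz on A
  have hAfin : volume A < ⊤ := (measure_mono hAQ).trans_lt hQfin
  haveI : Fact (volume A < ⊤) := ⟨hAfin⟩
  -- integrability of g^2 on Q
  have hre2m : AEStronglyMeasurable (fun x => (b x).re ^ 2) (volume.restrict Q) := by
    have h1 : AEStronglyMeasurable (fun x => (b x).re) (volume.restrict Q) :=
      hbre.aestronglyMeasurable
    exact h1.pow 2
  have hre2 : IntegrableOn (fun x => (b x).re ^ 2) Q := by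
    refine Integrable.mono' hb2 hre2m (ae_of_all _ fun x => ?_)
    have h := Complex.abs_re_le_norm (b x)
    rw [Real.norm_eq_abs, abs_pow, sq_abs]
    nlinarith [h, sq_abs (b x).re, abs_nonneg (b x).re]
  have hg2int : IntegrableOn (fun x => g x ^ 2) Q := by
    have h1 : IntegrableOn (fun x : Fin n → ℝ => 1 - 2 * (b x).re + (b x).re ^ 2) Q :=
      ((integrableOn_const hQfin.ne).sub (hbre.const_mul 2)).add hre2
    refine h1.congr_fun (fun x _ => ?_) hmQ
    rw [hgdef]; ring
  have hgm : AEStronglyMeasurable g (volume.restrict A) :=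
    (hgint.mono_set hAQ).aestronglyMeasurable
  have hgL2 : MemLp g (ENNReal.ofReal 2) (volume.restrict A) := by
    have : MemLp g 2 (volume.restrict A) :=
      (memLp_two_iff_integrable_sq hgm).2 (hg2int.mono_set hAQ)
    simpa [ENNReal.ofReal_ofNat] using this
  have h1L2 : MemLp (fun _ : Fin n → ℝ => (1:ℝ)) (ENNReal.ofReal 2) (volume.restrict A) := by
    simpa [ENNReal.ofReal_ofNat] using
      (memLp_const (μ := volume.restrict A) (1:ℝ))
  have hpq : Real.HolderConjugate 2 2 := Real.holderConjugate_iff.mpr ⟨one_lt_two, by norm_num⟩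
  have hCS := integral_mul_norm_le_Lp_mul_Lq (μ := volume.restrict A) hpq hgL2 h1L2
  set D : ℝ := ∫ x in A, g x ^ 2 with hDdef
  set M : ℝ := (volume A).toReal with hMdef
  have hD0 : 0 ≤ D := by
    rw [hDdef]; exact setIntegral_nonneg (hmQ.diff hmE) (fun x _ => sq_nonneg _)
  have hM0 : (0:ℝ) ≤ M := ENNReal.toReal_nonneg
  have e2 : (∫ x in A, ‖g x‖ ^ (2:ℝ)) = D := by
    rw [hDdef]
    refine integral_congr_ae (ae_of_all _ fun x => ?_)
    simp only [Real.rpow_two, Real.norm_eq_abs, sq_abs]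
  have e3 : (∫ x in A, ‖(1:ℝ)‖ ^ (2:ℝ)) = M := by
    have : ∀ x : Fin n → ℝ, ‖(1:ℝ)‖ ^ (2:ℝ) = 1 := fun x => by
      rw [norm_one, Real.one_rpow]
    simp only [norm_one, Real.one_rpow, setIntegral_const, measureReal_def, smul_eq_mul, mul_one, hMdef]
  rw [e2, e3] at hCS
  have e1 : (∫ x in A, ‖g x‖ * ‖(1:ℝ)‖) = ∫ x in A, |g x| := by
    simp [Real.norm_eq_abs]
  rw [e1] at hCS
  rw [← Real.sqrt_eq_rpow, ← Real.sqrt_eq_rpow] at hCS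
  have hchain : (1 - δ) * S ≤ Real.sqrt D * Real.sqrt M := by linarith
  have hkey : ((1 - δ) * S) ^ 2 ≤ D * M := by
    have h1 : 0 ≤ (1 - δ) * S := mul_nonneg hd0.le hS0
    nlinarith [Real.sq_sqrt hD0, Real.sq_sqrt hM0, Real.sqrt_nonneg D, Real.sqrt_nonneg M]
  have hre2pt : ∀ x, (b x).re ^ 2 ≤ ‖b x‖ ^ 2 := fun x => by
    have h := Complex.abs_re_le_norm (b x)
    nlinarith [sq_abs (b x).re, abs_nonneg (b x).re]
  have hDQ : D ≤ ∫ x in Q, g x ^ 2 := by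
    rw [hDdef]
    exact setIntegral_mono_set hg2int (ae_of_all _ fun x => sq_nonneg _)
      (HasSubset.Subset.eventuallyLE hAQ)
  have hconst2 : IntegrableOn (fun _ : Fin n → ℝ => (2:ℝ)) Q :=
    integrableOn_const hQfin.ne
  have hg2le : (∫ x in Q, g x ^ 2) ≤ ∫ x in Q, (2 + 2 * ‖b x‖ ^ 2) := by
    refine setIntegral_mono_on hg2int (hconst2.add (hb2.const_mul 2)) hmQ fun x _ => ?_
    have := hre2pt x
    show (1 - (b x).re) ^ 2 ≤ 2 + 2 * ‖b x‖ ^ 2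
    nlinarith [sq_nonneg (1 + (b x).re)]
  have hval : (∫ x in Q, (2 + 2 * ‖b x‖ ^ 2)) = 2 * L + 2 * ∫ x in Q, ‖b x‖ ^ 2 := by
    rw [integral_add hconst2 (hb2.const_mul 2), setIntegral_const, integral_const_mul, measureReal_def,
      hvolQ, ENNReal.toReal_ofReal hL0.le, smul_eq_mul, mul_comm L 2]
  have hD : D ≤ 2 * (1 + C) * L := by
    rw [hval] at hg2le
    nlinarith [hbC]
  have hvolA : volume A = ENNReal.ofReal (L - S) := by
    rw [hAdef, measure_diff hEQ hmE.nullMeasurableSet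
      (by rw [hvolE']; exact ENNReal.ofReal_ne_top), hvolQ, hvolE',
      ← ENNReal.ofReal_sub _ hS0]
  have hM : M = L - S := by
    rw [hMdef, hvolA, ENNReal.toReal_ofReal (by linarith)]
  have hK : (0:ℝ) < 1 + C := by linarith
  have hηpos : 0 < η := by positivity
  have hη8 : (1 - δ) ^ 2 = 8 * (1 + C) * η := by
    rw [hηdef]; field_simp
  have hηsmall : η < 1 / 8 := by
    rw [hηdef, div_lt_iff₀ (by positivity)]
    nlinarith
  have hkey2 : (1 - δ) ^ 2 * S ^ 2 ≤ 2 * (1 + C) * L * (L - S) := by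
    have hDM : D * M ≤ 2 * (1 + C) * L * (L - S) := by
      rw [hM]
      nlinarith [hD, hD0, hSL]
    calc (1 - δ) ^ 2 * S ^ 2 = ((1 - δ) * S) ^ 2 := by ring
      _ ≤ D * M := hkey
      _ ≤ _ := hDM
  exact final_num C δ η L S hC hδ0 hδ1 hηdef hL0 hS0 hSL hkey2
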